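/- Let f(q) denote the number of c-spread sequences of length q with f(0):=1. Then for q ≥ c+1, f(q) ≤ f(q−1) + 2·∑_{z=c}^{q−1} 2^{z/c}·f(q−z−1). -/

import Mathlib

/-- A sequence `s` of positive integers of length `q` is `c`-spread if each entry equal
to `1` can be mapped (by a partial assignment `f`) to an entry greater than `1`, such
that every entry `s i ≥ 2` has at least `⌈c log₂ (s i)⌉` entries, either all
immediately before it or all immediately after it, that equal `1` and are mapped
to it. -/
def CSpread (c : ℕ) {q : ℕ} (s : Fin q → ℕ) : Prop :=
  (∀ i, 1 ≤ s i) ∧ ∃ f : Fin q → Option (Fin q),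
    (∀ i j, f i = some j → s i = 1 ∧ 2 ≤ s j) ∧
    ∀ i : Fin q, 2 ≤ s i →
      ((⌈(c : ℝ) * Real.logb 2 (s i)⌉₊ ≤ (i : ℕ) ∧
        ∀ j : Fin q, (i : ℕ) - ⌈(c : ℝ) * Real.logb 2 (s i)⌉₊ ≤ (j : ℕ) → (j : ℕ) < (i : ℕ) →
          s j = 1 ∧ f j = some i) ∨
       ((i : ℕ) + ⌈(c : ℝ) * Real.logb 2 (s i)⌉₊ < q ∧
        ∀ j : Fin q, (i : ℕ) < (j : ℕ) → (j : ℕ) ≤ (i : ℕ) + ⌈(c : ℝ) * Real.logb 2 (s i)⌉₊ →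
          s j = 1 ∧ f j = some i))

/-- The number of `c`-spread sequences of length `q` (equal to `1` when `q = 0`). -/
noncomputable def fC (c q : ℕ) : ℕ :=
  ({s : Fin q → ℕ | CSpread c s} : Set (Fin q → ℕ)).ncard


noncomputable def ZZ (c r : ℕ) : ℕ := ⌈(c : ℝ) * Real.logb 2 r⌉₊

lemma one_le_logb {r : ℕ} (hr : 2 ≤ r) : 1 ≤ Real.logb 2 r := by
  rw [show (1:ℝ) = Real.logb 2 2 by simp]
  exact Real.logb_le_logb_of_le (by norm_num) (by norm_num) (by exact_mod_cast hr)

lemma c_le_ZZ {c r : ℕ} (hr : 2 ≤ r) : c ≤ ZZ c r := by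
  have h1 := one_le_logb hr
  have : (c:ℝ) ≤ (c:ℝ) * Real.logb 2 r := by nlinarith [Nat.cast_nonneg (α := ℝ) c]
  have := this.trans (Nat.le_ceil _)
  exact_mod_cast this

lemma r_le_floor {c r : ℕ} (hc : 1 ≤ c) (hr : 2 ≤ r) :
    r ≤ ⌊(2:ℝ) ^ ((ZZ c r : ℝ) / (c:ℝ))⌋₊ := by
  have hcr : (0:ℝ) < c := by exact_mod_cast hc
  have h1 : (c:ℝ) * Real.logb 2 r ≤ ZZ c r := Nat.le_ceil _
  have h2 : Real.logb 2 r ≤ (ZZ c r : ℝ) / c := by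
    rw [le_div_iff₀ hcr]; linarith
  have h3 : (r:ℝ) ≤ (2:ℝ) ^ ((ZZ c r : ℝ) / (c:ℝ)) := by
    rw [← Real.logb_le_iff_le_rpow (by norm_num) (by positivity : (0:ℝ) < (r:ℝ))]
    exact h2
  exact Nat.le_floor h3


def emb (q k : ℕ) : Fin (q - k) → Fin q :=
  fun i => ⟨i.1 + k, by have := i.isLt; omega⟩

@[simp] lemma emb_val (q k : ℕ) (i : Fin (q - k)) : ((emb q k i : Fin q) : ℕ) = i.1 + k := rfl

def drop {q : ℕ} (k : ℕ) (s : Fin q → ℕ) : Fin (q - k) → ℕ :=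
  fun i => s (emb q k i)

lemma cspread_drop {c q : ℕ} (k : ℕ) {s : Fin q → ℕ}
    (h1 : ∀ i, 1 ≤ s i) (f : Fin q → Option (Fin q))
    (hf1 : ∀ i j, f i = some j → s i = 1 ∧ 2 ≤ s j)
    (hf2 : ∀ i : Fin q, k ≤ (i : ℕ) → 2 ≤ s i →
      ((ZZ c (s i) + k ≤ (i : ℕ) ∧ ∀ j : Fin q, (i : ℕ) - ZZ c (s i) ≤ (j : ℕ) →
          (j : ℕ) < (i : ℕ) → s j = 1 ∧ f j = some i) ∨
       ((i : ℕ) + ZZ c (s i) < q ∧ ∀ j : Fin q, (i : ℕ) < (j : ℕ) →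
          (j : ℕ) ≤ (i : ℕ) + ZZ c (s i) → s j = 1 ∧ f j = some i))) :
    CSpread c (drop k s) := by
  classical
  refine ⟨fun i => h1 _, ?_⟩
  refine ⟨fun i => (f (emb q k i)).bind (fun j =>
    if h : k ≤ (j:ℕ) ∧ (j:ℕ) - k < q - k then some ⟨(j:ℕ) - k, h.2⟩ else none), ?_, ?_⟩
  · intro i' j' hij
    rcases hfe : f (emb q k i') with _ | j
    · simp [hfe] at hij
    · simp only [hfe, Option.bind_some] at hij
      split at hij
      · rename_i h
        have hj' : (j':ℕ) = (j:ℕ) - k := (congrArg Fin.val (Option.some_inj.mp hij)).symm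
        obtain ⟨hs1, hs2⟩ := hf1 _ _ hfe
        refine ⟨hs1, ?_⟩
        have : emb q k j' = j := by apply Fin.ext; simp [hj']; omega
        show 2 ≤ s (emb q k j')
        rw [this]; exact hs2
      · exact absurd hij (by simp)
  · intro i' hi'
    have hbig : 2 ≤ s (emb q k i') := hi'
    have hZ : ⌈(c : ℝ) * Real.logb 2 (drop k s i')⌉₊ = ZZ c (s (emb q k i')) := rfl
    have hilt : i'.1 < q - k := i'.isLt
    rcases hf2 (emb q k i') (by simp) hbig with ⟨hle, hblk⟩ | ⟨hlt, hblk⟩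
    · left
      rw [hZ]
      rw [emb_val] at hle
      refine ⟨by omega, ?_⟩
      intro j' hj1 hj2
      have hj := hblk (emb q k j') (by simp; omega) (by simp; omega)
      refine ⟨hj.1, ?_⟩
      simp only [hj.2, Option.bind_some]
      rw [dif_pos ⟨by simp, by simp⟩]
      exact congrArg some (Fin.ext (by simp))
    · right
      rw [hZ]
      rw [emb_val] at hlt
      refine ⟨by omega, ?_⟩
      intro j' hj1 hj2
      have hj := hblk (emb q k j') (by simp; omega) (by simp; omega)
      refine ⟨hj.1, ?_⟩
      simp only [hj.2, Option.bind_some]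
      rw [dif_pos ⟨by simp, by simp⟩]
      exact congrArg some (Fin.ext (by simp))

lemma ZZ_def (c r : ℕ) : ⌈(c:ℝ) * Real.logb 2 (r:ℕ)⌉₊ = ZZ c r := rfl

lemma cover {c q : ℕ} (hc : 1 ≤ c) (hq : 1 ≤ q) {s : Fin q → ℕ} (hs : CSpread c s) :
    (s ⟨0, by omega⟩ = 1 ∧ CSpread c (drop 1 s)) ∨
    ∃ z : ℕ, c ≤ z ∧ z ≤ q - 1 ∧
      ((2 ≤ s ⟨0, by omega⟩ ∧ ZZ c (s ⟨0, by omega⟩) = z ∧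
         (∀ j : Fin q, 1 ≤ (j:ℕ) → (j:ℕ) ≤ z → s j = 1) ∧ CSpread c (drop (z+1) s)) ∨
       (∃ hz : z < q, 2 ≤ s ⟨z, hz⟩ ∧ ZZ c (s ⟨z, hz⟩) = z ∧
         (∀ j : Fin q, (j:ℕ) < z → s j = 1) ∧ CSpread c (drop (z+1) s))) := by
  obtain ⟨h1, f, hf1, hf2⟩ := hs
  simp only [ZZ_def] at hf2
  set i0 : Fin q := ⟨0, by omega⟩ with hi0
  by_cases h0 : 2 ≤ s i0
  · -- first entry big: B_R case
    have hcz : c ≤ ZZ c (s i0) := c_le_ZZ h0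
    rcases hf2 i0 h0 with ⟨hle, _⟩ | ⟨hlt, hblk⟩
    · exfalso
      have hz0 : (i0 : ℕ) = 0 := rfl
      omega
    · have hi0v : (i0 : ℕ) = 0 := rfl
      rw [hi0v] at hlt hblk
      refine Or.inr ⟨ZZ c (s i0), hcz, by omega, Or.inl ⟨h0, rfl, ?_, ?_⟩⟩
      · intro j hj1 hj2
        exact (hblk j (by omega) (by simpa using hj2)).1
      · apply cspread_drop (ZZ c (s i0) + 1) h1 f hf1
        intro i hi hbig
        rcases hf2 i hbig with ⟨hle, hb⟩ | h
        · left
          refine ⟨?_, hb⟩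
          by_contra hcon
          push_neg at hcon
          have hzq : ZZ c (s i0) < q := by omega
          have hj1 := hb ⟨ZZ c (s i0), hzq⟩ (by simp; omega) (by simp; omega)
          have hj2 := hblk ⟨ZZ c (s i0), hzq⟩ (by simp; omega) (by simp)
          have hii : i = i0 := Option.some_inj.mp (hj1.2.symm.trans hj2.2)
          rw [hii, hi0v] at hi
          omega
        · right; exact h
  · -- first entry is 1
    have h01 : s i0 = 1 := by have := h1 i0; omega
    by_cases hx : ∃ i : Fin q, 2 ≤ s i ∧ ZZ c (s i) ≤ (i:ℕ) ∧ (i:ℕ) ≤ ZZ c (s i) ∧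
        ∀ j : Fin q, (i:ℕ) - ZZ c (s i) ≤ (j:ℕ) → (j:ℕ) < (i:ℕ) → s j = 1 ∧ f j = some i
    · -- B_L case
      obtain ⟨i, hbig, hz1, hz2, hblk⟩ := hx
      have hzi : (i:ℕ) = ZZ c (s i) := by omega
      have hiq : ZZ c (s i) < q := hzi ▸ i.isLt
      have hie : (⟨ZZ c (s i), hiq⟩ : Fin q) = i := Fin.ext (by simp [hzi])
      refine Or.inr ⟨ZZ c (s i), c_le_ZZ hbig, by omega,
        Or.inr ⟨hiq, by rw [hie]; exact hbig, by rw [hie], ?_, ?_⟩⟩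
      · intro j hj
        exact (hblk j (by omega) (by omega)).1
      · apply cspread_drop (ZZ c (s i) + 1) h1 f hf1
        intro i' hi' hbig'
        rcases hf2 i' hbig' with ⟨hle, hb⟩ | h
        · left
          refine ⟨?_, hb⟩
          by_contra hcon
          push_neg at hcon
          have hj1 := hb ⟨ZZ c (s i), hiq⟩ (by simp; omega) (by simp; omega)
          rw [hie] at hj1
          have : (1:ℕ) < 1 := by
            calc 1 < 2 := one_lt_two
            _ ≤ s i := hbig
            _ = 1 := hj1.1
          omega
        · right; exact h
    · -- A case
      refine Or.inl ⟨h01, ?_⟩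
      apply cspread_drop 1 h1 f hf1
      intro i hi hbig
      rcases hf2 i hbig with ⟨hle, hb⟩ | h
      · left
        refine ⟨?_, hb⟩
        by_contra hcon
        push_neg at hcon
        exact hx ⟨i, hbig, hle, by omega, hb⟩
      · right; exact h

lemma cspread_bdd {c n : ℕ} (hc : 1 ≤ c) {s : Fin n → ℕ} (hs : CSpread c s) (i : Fin n) :
    s i ≤ 2 ^ n := by
  obtain ⟨h1, f, hf1, hf2⟩ := hs
  by_cases hbig : 2 ≤ s i
  · have hZ : ZZ c (s i) ≤ n := by
      rcases hf2 i hbig with ⟨hle, _⟩ | ⟨hlt, _⟩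
      · have := i.isLt; rw [ZZ_def] at *; omega
      · rw [ZZ_def] at *; omega
    have hc1 : (1:ℝ) ≤ (c:ℝ) := by exact_mod_cast hc
    have h2 : (c:ℝ) * Real.logb 2 (s i) ≤ n := (Nat.le_ceil _).trans (by exact_mod_cast hZ)
    have hlb : 1 ≤ Real.logb 2 (s i) := one_le_logb hbig
    have h3 : Real.logb 2 (s i) ≤ n := by nlinarith
    have hsp : (0:ℝ) < (s i : ℝ) := by
      have := h1 i; exact_mod_cast Nat.lt_of_lt_of_le Nat.zero_lt_one this
    have h4 : (s i : ℝ) ≤ (2:ℝ) ^ (n:ℝ) := by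
      rw [← Real.logb_le_iff_le_rpow (by norm_num) hsp]
      exact h3
    have h5 : ((2:ℝ)) ^ (n:ℝ) = ((2 ^ n : ℕ) : ℝ) := by
      rw [Real.rpow_natCast]; push_cast; ring
    rw [h5] at h4
    exact_mod_cast h4
  · exact le_trans (by omega) Nat.one_le_two_pow

lemma cspread_finite {c : ℕ} (hc : 1 ≤ c) (n : ℕ) :
    ({s : Fin n → ℕ | CSpread c s}).Finite := by
  apply Set.Finite.subset (Set.Finite.pi (t := fun _ : Fin n => Set.Iic (2 ^ n))
    (fun _ => Set.finite_Iic _))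
  intro s hs
  simp only [Set.mem_pi, Set.mem_univ, Set.mem_Iic, forall_true_left]
  intro i
  exact cspread_bdd hc hs i

lemma ncard_biUnion_le {α ι : Type*} (t : Finset ι) (f : ι → Set α) :
    (⋃ i ∈ t, f i).ncard ≤ ∑ i ∈ t, (f i).ncard := by
  classical
  induction t using Finset.induction with
  | empty => simp
  | insert _ _ h ih =>
    rename_i a t'
    rw [Finset.set_biUnion_insert, Finset.sum_insert h]
    exact le_trans (Set.ncard_union_le _ _) (add_le_add_right ih _)

lemma ncard_prod {α β : Type*} (s : Set α) (t : Set β) :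
    (s ×ˢ t).ncard = s.ncard * t.ncard := by
  rw [← Nat.card_coe_set_eq, ← Nat.card_coe_set_eq, ← Nat.card_coe_set_eq,
    Nat.card_congr (Equiv.Set.prod s t), Nat.card_prod]

lemma setA_bound {c q : ℕ} (hc : 1 ≤ c) (hq : 1 ≤ q) :
    ({s : Fin q → ℕ | s ⟨0, by omega⟩ = 1 ∧ CSpread c (drop 1 s)}).Finite ∧
    ({s : Fin q → ℕ | s ⟨0, by omega⟩ = 1 ∧ CSpread c (drop 1 s)}).ncard ≤ fC c (q - 1) := by
  set A := {s : Fin q → ℕ | s ⟨0, by omega⟩ = 1 ∧ CSpread c (drop 1 s)} with hA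
  have hmaps : ∀ s ∈ A, drop 1 s ∈ {u : Fin (q - 1) → ℕ | CSpread c u} := fun s hs => hs.2
  have hinj : Set.InjOn (fun s : Fin q → ℕ => drop 1 s) A := by
    intro s hs t ht hst
    funext j
    rcases Nat.eq_zero_or_pos j.1 with hj | hj
    · have hj0 : j = ⟨0, by omega⟩ := Fin.ext hj
      rw [hj0]
      rw [hA] at hs ht
      rw [hs.1, ht.1]
    · have hj2 : j.1 - 1 < q - 1 := by have := j.isLt; omega
      have hje : emb q 1 ⟨j.1 - 1, hj2⟩ = j := Fin.ext (by simp; omega)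
      rw [← hje]
      exact congrFun hst ⟨j.1 - 1, hj2⟩
  constructor
  · apply Set.Finite.of_finite_image _ hinj
    exact ((cspread_finite hc (q-1)).subset (by rintro _ ⟨s, hs, rfl⟩; exact hmaps s hs))
  · exact Set.ncard_le_ncard_of_injOn _ hmaps hinj (cspread_finite hc (q-1))

lemma setBR_bound {c q z : ℕ} (hc : 1 ≤ c) (hzq : z < q) :
    ({s : Fin q → ℕ | 2 ≤ s ⟨0, by omega⟩ ∧ ZZ c (s ⟨0, by omega⟩) = z ∧
      (∀ j : Fin q, 1 ≤ (j:ℕ) → (j:ℕ) ≤ z → s j = 1) ∧ CSpread c (drop (z+1) s)}).Finite ∧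
    ({s : Fin q → ℕ | 2 ≤ s ⟨0, by omega⟩ ∧ ZZ c (s ⟨0, by omega⟩) = z ∧
      (∀ j : Fin q, 1 ≤ (j:ℕ) → (j:ℕ) ≤ z → s j = 1) ∧ CSpread c (drop (z+1) s)}).ncard
      ≤ (Finset.Icc 2 (⌊(2:ℝ)^((z:ℝ)/(c:ℝ))⌋₊)).card * fC c (q - z - 1) := by
  set M := ⌊(2:ℝ)^((z:ℝ)/(c:ℝ))⌋₊ with hM
  set B := {s : Fin q → ℕ | 2 ≤ s ⟨0, by omega⟩ ∧ ZZ c (s ⟨0, by omega⟩) = z ∧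
      (∀ j : Fin q, 1 ≤ (j:ℕ) → (j:ℕ) ≤ z → s j = 1) ∧ CSpread c (drop (z+1) s)} with hB
  have hqz : q - (z + 1) = q - z - 1 := by omega
  set T : Set (ℕ × (Fin (q - (z+1)) → ℕ)) :=
    (↑(Finset.Icc 2 M) : Set ℕ) ×ˢ {u : Fin (q - (z+1)) → ℕ | CSpread c u} with hT
  have hTfin : T.Finite :=
    Set.Finite.prod (Finset.finite_toSet _) (cspread_finite hc _)
  have hmaps : ∀ s ∈ B, ((s ⟨0, by omega⟩ : ℕ), drop (z+1) s) ∈ T := by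
    intro s hs
    rw [hB] at hs
    refine ⟨?_, hs.2.2.2⟩
    simp only [Finset.coe_Icc, Set.mem_Icc]
    refine ⟨hs.1, ?_⟩
    have := r_le_floor hc hs.1
    rw [hs.2.1] at this
    exact this
  have hinj : Set.InjOn (fun s : Fin q → ℕ => ((s ⟨0, by omega⟩ : ℕ), drop (z+1) s)) B := by
    intro s hs t ht hst
    rw [hB] at hs ht
    simp only [Prod.mk.injEq] at hst
    funext j
    rcases Nat.lt_or_ge j.1 1 with hj | hj
    · have hj0 : j = ⟨0, by omega⟩ := Fin.ext (by simp; omega)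
      rw [hj0]; exact hst.1
    · rcases Nat.lt_or_ge j.1 (z+1) with hjz | hjz
      · rw [hs.2.2.1 j hj (by omega), ht.2.2.1 j hj (by omega)]
      · have hj2 : j.1 - (z+1) < q - (z+1) := by have := j.isLt; omega
        have hje : emb q (z+1) ⟨j.1 - (z+1), hj2⟩ = j := Fin.ext (by simp; omega)
        rw [← hje]
        exact congrFun hst.2 ⟨j.1 - (z+1), hj2⟩
  constructor
  · apply Set.Finite.of_finite_image _ hinj
    exact (hTfin.subset (by rintro _ ⟨s, hs, rfl⟩; exact hmaps s hs))
  · have h1 := Set.ncard_le_ncard_of_injOn _ hmaps hinj hTfin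
    rw [hT, ncard_prod, Set.ncard_coe_finset] at h1
    rw [← hqz]
    exact h1

lemma setBL_bound {c q z : ℕ} (hc : 1 ≤ c) (hzq : z < q) :
    ({s : Fin q → ℕ | ∃ hz : z < q, 2 ≤ s ⟨z, hz⟩ ∧ ZZ c (s ⟨z, hz⟩) = z ∧
      (∀ j : Fin q, (j:ℕ) < z → s j = 1) ∧ CSpread c (drop (z+1) s)}).Finite ∧
    ({s : Fin q → ℕ | ∃ hz : z < q, 2 ≤ s ⟨z, hz⟩ ∧ ZZ c (s ⟨z, hz⟩) = z ∧
      (∀ j : Fin q, (j:ℕ) < z → s j = 1) ∧ CSpread c (drop (z+1) s)}).ncard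
      ≤ (Finset.Icc 2 (⌊(2:ℝ)^((z:ℝ)/(c:ℝ))⌋₊)).card * fC c (q - z - 1) := by
  set M := ⌊(2:ℝ)^((z:ℝ)/(c:ℝ))⌋₊ with hM
  set B := {s : Fin q → ℕ | ∃ hz : z < q, 2 ≤ s ⟨z, hz⟩ ∧ ZZ c (s ⟨z, hz⟩) = z ∧
      (∀ j : Fin q, (j:ℕ) < z → s j = 1) ∧ CSpread c (drop (z+1) s)} with hB
  have hqz : q - (z + 1) = q - z - 1 := by omega
  set T : Set (ℕ × (Fin (q - (z+1)) → ℕ)) :=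
    (↑(Finset.Icc 2 M) : Set ℕ) ×ˢ {u : Fin (q - (z+1)) → ℕ | CSpread c u} with hT
  have hTfin : T.Finite :=
    Set.Finite.prod (Finset.finite_toSet _) (cspread_finite hc _)
  have hmaps : ∀ s ∈ B, ((s ⟨z, hzq⟩ : ℕ), drop (z+1) s) ∈ T := by
    intro s hs
    rw [hB] at hs
    obtain ⟨hz, hs1, hs2, hs3, hs4⟩ := hs
    refine ⟨?_, hs4⟩
    simp only [Finset.coe_Icc, Set.mem_Icc]
    refine ⟨hs1, ?_⟩
    have := r_le_floor hc hs1
    rw [hs2] at this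
    exact this
  have hinj : Set.InjOn (fun s : Fin q → ℕ => ((s ⟨z, hzq⟩ : ℕ), drop (z+1) s)) B := by
    intro s hs t ht hst
    rw [hB] at hs ht
    obtain ⟨_, _, _, hs3, _⟩ := hs
    obtain ⟨_, _, _, ht3, _⟩ := ht
    simp only [Prod.mk.injEq] at hst
    funext j
    rcases Nat.lt_or_ge j.1 z with hj | hj
    · rw [hs3 j hj, ht3 j hj]
    · rcases Nat.eq_or_lt_of_le hj with hjz | hjz
      · have hj0 : j = ⟨z, hzq⟩ := Fin.ext hjz.symm
        rw [hj0]; exact hst.1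
      · have hj2 : j.1 - (z+1) < q - (z+1) := by have := j.isLt; omega
        have hje : emb q (z+1) ⟨j.1 - (z+1), hj2⟩ = j := Fin.ext (by simp; omega)
        rw [← hje]
        exact congrFun hst.2 ⟨j.1 - (z+1), hj2⟩
  constructor
  · apply Set.Finite.of_finite_image _ hinj
    exact (hTfin.subset (by rintro _ ⟨s, hs, rfl⟩; exact hmaps s hs))
  · have h1 := Set.ncard_le_ncard_of_injOn _ hmaps hinj hTfin
    rw [hT, ncard_prod, Set.ncard_coe_finset] at h1
    rw [← hqz]
    exact h1

/-- For `q ≥ c + 1`,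
`f(q) ≤ f(q-1) + 2 ∑_{z=c}^{q-1} 2^{z/c} f(q-z-1)`. -/
theorem cspread_recursion (c : ℕ) (q : ℕ) (hq : c + 1 ≤ q) :
    (fC c q : ℝ) ≤ (fC c (q - 1) : ℝ) +
      2 * ∑ z ∈ Finset.Icc c (q - 1),
        (2 : ℝ) ^ ((z : ℝ) / (c : ℝ)) * (fC c (q - z - 1) : ℝ) := by
  rcases Nat.eq_zero_or_pos c with hc0 | hc
  · -- degenerate case c = 0 : infinitely many 0-spread sequences, so fC 0 q = 0
    subst hc0
    have hq1 : 1 ≤ q := hq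
    have hinf : {s : Fin q → ℕ | CSpread 0 s}.Infinite := by
      apply Set.infinite_of_injective_forall_mem
        (f := fun n : ℕ => (fun _ => n + 1 : Fin q → ℕ))
      · intro a b h
        have := congrFun h ⟨0, by omega⟩
        simpa using this
      · intro n
        refine ⟨fun i => Nat.le_add_left 1 n, fun _ => none, by simp, ?_⟩
        intro i hbig
        left
        constructor
        · simp
        · intro j hj1 hj2
          simp at hj1
          omega
    have h0 : fC 0 q = 0 := hinf.ncard
    rw [h0]
    push_cast
    have hsum : (0:ℝ) ≤ ∑ z ∈ Finset.Icc 0 (q - 1),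
        (2 : ℝ) ^ ((z : ℝ) / ((0:ℕ) : ℝ)) * (fC 0 (q - z - 1) : ℝ) := by
      apply Finset.sum_nonneg
      intro z hz
      positivity
    positivity
  · -- main case c ≥ 1
    have hq1 : 1 ≤ q := by omega
    set M : ℕ → ℕ := fun z => ⌊(2:ℝ)^((z:ℝ)/(c:ℝ))⌋₊ with hM
    set A := {s : Fin q → ℕ | s ⟨0, by omega⟩ = 1 ∧ CSpread c (drop 1 s)} with hA
    set BR : ℕ → Set (Fin q → ℕ) := fun z =>
      {s : Fin q → ℕ | 2 ≤ s ⟨0, by omega⟩ ∧ ZZ c (s ⟨0, by omega⟩) = z ∧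
        (∀ j : Fin q, 1 ≤ (j:ℕ) → (j:ℕ) ≤ z → s j = 1) ∧ CSpread c (drop (z+1) s)} with hBR
    set BL : ℕ → Set (Fin q → ℕ) := fun z =>
      {s : Fin q → ℕ | ∃ hz : z < q, 2 ≤ s ⟨z, hz⟩ ∧ ZZ c (s ⟨z, hz⟩) = z ∧
        (∀ j : Fin q, (j:ℕ) < z → s j = 1) ∧ CSpread c (drop (z+1) s)} with hBL
    have hzlt : ∀ z ∈ Finset.Icc c (q - 1), z < q := by
      intro z hz
      rw [Finset.mem_Icc] at hz
      omega
    have hcover : {s : Fin q → ℕ | CSpread c s} ⊆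
        A ∪ ⋃ z ∈ Finset.Icc c (q - 1), (BR z ∪ BL z) := by
      intro s hs
      rcases cover hc hq1 hs with ⟨h1, h2⟩ | ⟨z, hz1, hz2, h⟩
      · left; exact ⟨h1, h2⟩
      · right
        simp only [Set.mem_iUnion]
        refine ⟨z, Finset.mem_Icc.mpr ⟨hz1, hz2⟩, ?_⟩
        rcases h with h | h
        · left; exact h
        · right; exact h
    have hfin : (A ∪ ⋃ z ∈ Finset.Icc c (q - 1), (BR z ∪ BL z)).Finite := by
      refine (setA_bound hc hq1).1.union ?_
      apply Set.Finite.biUnion (Finset.finite_toSet _)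
      intro z hz
      exact ((setBR_bound hc (hzlt z hz)).1).union ((setBL_bound hc (hzlt z hz)).1)
    have main_nat : fC c q ≤ fC c (q-1) + ∑ z ∈ Finset.Icc c (q - 1),
        ((Finset.Icc 2 (M z)).card * fC c (q - z - 1)
          + (Finset.Icc 2 (M z)).card * fC c (q - z - 1)) := by
      calc fC c q ≤ (A ∪ ⋃ z ∈ Finset.Icc c (q - 1), (BR z ∪ BL z)).ncard :=
            Set.ncard_le_ncard hcover hfin
        _ ≤ A.ncard + (⋃ z ∈ Finset.Icc c (q - 1), (BR z ∪ BL z)).ncard :=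
            Set.ncard_union_le _ _
        _ ≤ A.ncard + ∑ z ∈ Finset.Icc c (q - 1), (BR z ∪ BL z).ncard :=
            add_le_add_right (ncard_biUnion_le _ _) _
        _ ≤ _ := by
            apply add_le_add (setA_bound hc hq1).2
            apply Finset.sum_le_sum
            intro z hz
            exact le_trans (Set.ncard_union_le _ _)
              (add_le_add (setBR_bound hc (hzlt z hz)).2 (setBL_bound hc (hzlt z hz)).2)
    have hreal : (fC c q : ℝ) ≤ (fC c (q-1) : ℝ) + ∑ z ∈ Finset.Icc c (q - 1),
        (((Finset.Icc 2 (M z)).card : ℝ) * (fC c (q - z - 1) : ℝ)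
          + ((Finset.Icc 2 (M z)).card : ℝ) * (fC c (q - z - 1) : ℝ)) := by
      have := (Nat.cast_le (α := ℝ)).mpr main_nat
      push_cast at this
      convert this using 2
    refine hreal.trans ?_
    rw [Finset.mul_sum]
    apply add_le_add_right
    apply Finset.sum_le_sum
    intro z hz
    have hK : ((Finset.Icc 2 (M z)).card : ℝ) ≤ (2:ℝ)^((z:ℝ)/(c:ℝ)) := by
      have h1 : (Finset.Icc 2 (M z)).card ≤ M z := by
        rw [Nat.card_Icc]; omega
      have h2 : ((M z : ℕ) : ℝ) ≤ (2:ℝ)^((z:ℝ)/(c:ℝ)) := Nat.floor_le (by positivity)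
      exact le_trans (by exact_mod_cast h1) h2
    have hf : (0:ℝ) ≤ (fC c (q - z - 1) : ℝ) := Nat.cast_nonneg _
    nlinarith
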